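/- Consider the OCO with ρ-discounted infinite memory instance (ρ ∈ (0,1)) with the 2-norm, built over a nonempty closed convex subset 𝒳 of a real Hilbert space 𝒲. Let f_1, …, f_T : ℋ → ℝ be L-Lipschitz continuous with each f̄_t convex and L̄-Lipschitz continuous, let R : 𝒳 → ℝ be α-strongly convex with |R(x) − R(x̃)| ≤ D for all x, x̃ ∈ 𝒳, and let the x_t be FTRL iterates with a suitable step size η > 0. Then there are absolute constants C, C' > 0 such that the policy regret satisfies Σ_{t=1}^{T} f_t(h_t) − inf_{x ∈ 𝒳} Σ_{t=1}^{T} f̄_t(x) ≤ C √((D/α) T L L̄ (1−ρ²)^{−3/2}) ≤ C' √((D/α) T L² (1−ρ)^{−2}). -/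

import Mathlib

open Finset

set_option maxHeartbeats 2000000

open Finset

lemma geom_fin_sum_le {q : ℝ} (h0 : 0 ≤ q) (h1 : q < 1) (t : ℕ) :
    ∑ i ∈ Finset.range t, q ^ i ≤ (1 - q)⁻¹ := by
  have := Summable.sum_le_tsum (Finset.range t) (fun i _ => pow_nonneg h0 i)
    (summable_geometric_of_lt_one h0 h1)
  rwa [tsum_geometric_of_lt_one h0 h1] at this

lemma geom_sq_sum_le {q : ℝ} (h0 : 0 ≤ q) (h1 : q < 1) (t : ℕ) :
    ∑ i ∈ Finset.range t, (i : ℝ) ^ 2 * q ^ i ≤ 2 / (1 - q) ^ 3 := by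
  have hq : ‖q‖ < 1 := by rwa [Real.norm_eq_abs, abs_of_nonneg h0]
  have hs : Summable (fun n : ℕ => (n : ℝ) ^ 2 * q ^ n) :=
    summable_pow_mul_geometric_of_norm_lt_one 2 hq
  have hs2 : Summable (fun n : ℕ => ((n + 2).choose 2 : ℝ) * q ^ n) :=
    (hasSum_choose_mul_geometric_of_norm_lt_one 2 hq).summable
  have h1' : ∑ i ∈ Finset.range t, (i : ℝ) ^ 2 * q ^ i ≤ ∑' n : ℕ, (n : ℝ) ^ 2 * q ^ n :=
    Summable.sum_le_tsum _ (fun i _ => mul_nonneg (by positivity) (pow_nonneg h0 i)) hs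
  have h2 : (∑' n : ℕ, (n : ℝ) ^ 2 * q ^ n) ≤ ∑' n : ℕ, 2 * (((n + 2).choose 2 : ℝ) * q ^ n) := by
    refine Summable.tsum_le_tsum (fun n => ?_) hs (hs2.mul_left 2)
    have key : 2 * (n + 2).choose 2 = (n + 2) * (n + 1) := by
      have he : 2 ∣ (n + 2) * (n + 1) := by
        have h := Nat.even_mul_succ_self (n + 1)
        rw [mul_comm] at h
        exact h.two_dvd
      rw [Nat.choose_two_right, show n + 2 - 1 = n + 1 from rfl]
      exact Nat.mul_div_cancel' he
    have : (n : ℝ) ^ 2 ≤ 2 * ((n + 2).choose 2 : ℝ) := by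
      have := congrArg (Nat.cast : ℕ → ℝ) key
      push_cast at this
      nlinarith [Nat.cast_nonneg (α := ℝ) n]
    calc (n : ℝ) ^ 2 * q ^ n ≤ 2 * ((n + 2).choose 2 : ℝ) * q ^ n := by
          exact mul_le_mul_of_nonneg_right this (pow_nonneg h0 n)
      _ = 2 * (((n + 2).choose 2 : ℝ) * q ^ n) := by ring
  have h3 : (∑' n : ℕ, 2 * (((n + 2).choose 2 : ℝ) * q ^ n)) = 2 * (1 / (1 - q) ^ 3) := by
    rw [tsum_mul_left, tsum_choose_mul_geometric_of_norm_lt_one 2 hq]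
  calc ∑ i ∈ Finset.range t, (i : ℝ) ^ 2 * q ^ i ≤ 2 * (1 / (1 - q) ^ 3) := by
        rw [← h3]; exact h1'.trans h2
    _ = 2 / (1 - q) ^ 3 := by ring

open Finset

lemma ftrl_core {W : Type*} [NormedAddCommGroup W] [NormedSpace ℝ W]
    (X : Set W) (φ : ℕ → W → ℝ) (R : W → ℝ) (α η D Leff : ℝ) (T : ℕ)
    (hα : 0 < α) (hη : 0 < η) (hLeff : 0 ≤ Leff)
    (hconv : ∀ t, 1 ≤ t → t ≤ T → ConvexOn ℝ X (φ t))
    (hlip : ∀ t, 1 ≤ t → t ≤ T → ∀ a ∈ X, ∀ b ∈ X, |φ t a - φ t b| ≤ Leff * ‖a - b‖)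
    (hR : StrongConvexOn X α R)
    (hosc : ∀ a ∈ X, ∀ b ∈ X, |R a - R b| ≤ D)
    (x : ℕ → W)
    (hx : ∀ t, 1 ≤ t → t ≤ T + 1 → x t ∈ X ∧ ∀ y ∈ X,
      (∑ s ∈ Finset.Icc 1 (t - 1), φ s (x t)) + R (x t) / η
        ≤ (∑ s ∈ Finset.Icc 1 (t - 1), φ s y) + R y / η) :
    (∀ t, 1 ≤ t → t ≤ T → ‖x t - x (t + 1)‖ ≤ 2 * η * Leff / α) ∧
    (∀ y ∈ X, (∑ t ∈ Finset.Icc 1 T, φ t (x t)) - ∑ t ∈ Finset.Icc 1 T, φ t y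
        ≤ T * (Leff * (2 * η * Leff / α)) + D / η) := by
  have hXconv : Convex ℝ X := hR.1
  have hxX : ∀ t, 1 ≤ t → t ≤ T + 1 → x t ∈ X := fun t h1 h2 => (hx t h1 h2).1
  have hFmid : ∀ j, j ≤ T → ∀ p ∈ X, ∀ q ∈ X,
      (∑ s ∈ Finset.Icc 1 j, φ s ((1/2 : ℝ) • p + (1/2 : ℝ) • q))
          + R ((1/2 : ℝ) • p + (1/2 : ℝ) • q) / η
        ≤ ((∑ s ∈ Finset.Icc 1 j, φ s p) + R p / η) / 2
          + ((∑ s ∈ Finset.Icc 1 j, φ s q) + R q / η) / 2 - α / (8 * η) * ‖p - q‖ ^ 2 := by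
    intro j hj p hp q hq
    have hsum : ∑ s ∈ Finset.Icc 1 j, φ s ((1/2 : ℝ) • p + (1/2 : ℝ) • q)
        ≤ ∑ s ∈ Finset.Icc 1 j, (1/2 * φ s p + 1/2 * φ s q) := by
      apply Finset.sum_le_sum
      intro s hs
      rw [Finset.mem_Icc] at hs
      have := (hconv s hs.1 (le_trans hs.2 hj)).2 hp hq
        (by norm_num : (0:ℝ) ≤ 1/2) (by norm_num : (0:ℝ) ≤ 1/2) (by norm_num)
      simpa [smul_eq_mul] using this
    have hRmid := hR.2 hp hq (by norm_num : (0:ℝ) ≤ 1/2) (by norm_num : (0:ℝ) ≤ 1/2)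
      (by norm_num : (1:ℝ)/2 + 1/2 = 1)
    rw [smul_eq_mul, smul_eq_mul] at hRmid
    have hRdiv : R ((1/2 : ℝ) • p + (1/2 : ℝ) • q) / η
        ≤ (1/2 * R p + 1/2 * R q - 1/2 * (1/2) * (α / 2 * ‖p - q‖ ^ 2)) / η :=
      (div_le_div_iff_of_pos_right hη).mpr hRmid
    have e1 : ∑ s ∈ Finset.Icc 1 j, (1/2 * φ s p + 1/2 * φ s q)
        = (∑ s ∈ Finset.Icc 1 j, φ s p) / 2 + (∑ s ∈ Finset.Icc 1 j, φ s q) / 2 := by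
      rw [Finset.sum_add_distrib, ← Finset.mul_sum, ← Finset.mul_sum]; ring
    have e2 : (1/2 * R p + 1/2 * R q - 1/2 * (1/2) * (α / 2 * ‖p - q‖ ^ 2)) / η
        = (R p / η) / 2 + (R q / η) / 2 - α / (8 * η) * ‖p - q‖ ^ 2 := by
      field_simp
      ring
    rw [e1] at hsum
    rw [e2] at hRdiv
    linarith
  have hstab : ∀ t, 1 ≤ t → t ≤ T → ‖x t - x (t + 1)‖ ≤ 2 * η * Leff / α := by
    intro t h1 h2
    obtain ⟨hxt, hmin1⟩ := hx t h1 (by omega)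
    obtain ⟨hxt1, hmin2⟩ := hx (t + 1) (by omega) (by omega)
    have hmid : (1/2 : ℝ) • x t + (1/2 : ℝ) • x (t + 1) ∈ X :=
      hXconv hxt hxt1 (by norm_num) (by norm_num) (by norm_num)
    have i1 := hmin1 _ hmid
    have i2 := hmin2 _ hmid
    rw [Nat.add_sub_cancel] at i2
    have m1 := hFmid (t - 1) (by omega) (x t) hxt (x (t + 1)) hxt1
    have m2 := hFmid t h2 (x t) hxt (x (t + 1)) hxt1
    have hsplit : ∀ z : W, ∑ s ∈ Finset.Icc 1 t, φ s z
        = (∑ s ∈ Finset.Icc 1 (t - 1), φ s z) + φ t z := by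
      intro z
      conv_lhs => rw [show t = (t - 1) + 1 by omega]
      rw [Finset.sum_Icc_succ_top (by omega : 1 ≤ t - 1 + 1)]
      rw [show t - 1 + 1 = t by omega]
    rw [hsplit, hsplit] at i2
    rw [hsplit, hsplit, hsplit] at m2
    set N := ‖x t - x (t + 1)‖ with hN
    have hN0 : 0 ≤ N := norm_nonneg _
    have hlipt := hlip t h1 h2 (x t) hxt (x (t + 1)) hxt1
    have habs : φ t (x t) - φ t (x (t + 1)) ≤ Leff * N :=
      le_trans (le_abs_self _) hlipt
    have key : α / (2 * η) * N ^ 2 ≤ φ t (x t) - φ t (x (t + 1)) := by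
      have e8 : α / (8 * η) * 4 = α / (2 * η) := by field_simp; ring
      nlinarith [i1, i2, m1, m2]
    have hηα : 0 < 2 * η := by linarith
    rw [le_div_iff₀ hα]
    have c1 := key.trans habs
    have c2 : α * N ^ 2 ≤ 2 * η * (Leff * N) := by
      rw [div_mul_eq_mul_div, div_le_iff₀ hηα] at c1
      nlinarith [c1]
    rcases eq_or_lt_of_le hN0 with h0 | hpos
    · nlinarith [hη.le, hLeff, mul_nonneg hη.le hLeff]
    · have c3 : (N * α) * N ≤ (2 * η * Leff) * N := by nlinarith [c2]
      exact le_of_mul_le_mul_right c3 hpos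
  refine ⟨hstab, ?_⟩
  have hBTL : ∀ n, n ≤ T → ∀ y ∈ X,
      (∑ t ∈ Finset.Icc 1 n, φ t (x (t + 1))) + R (x 1) / η
        ≤ (∑ t ∈ Finset.Icc 1 n, φ t y) + R y / η := by
    intro n
    induction n with
    | zero => intro _ y hy; simpa using (hx 1 le_rfl (by omega)).2 y hy
    | succ n ih =>
      intro hn y hy
      obtain ⟨hzX, hzmin⟩ := hx (n + 2) (by omega) (by omega)
      have hzmin' := hzmin y hy
      rw [show n + 2 - 1 = n + 1 from rfl] at hzmin'
      have ihz := ih (by omega) (x (n + 2)) hzX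
      rw [Finset.sum_Icc_succ_top (by omega : 1 ≤ n + 1) (fun t => φ t (x (t + 1))),
        Finset.sum_Icc_succ_top (by omega : 1 ≤ n + 1) (fun t => φ t y)]
      rw [Finset.sum_Icc_succ_top (by omega : 1 ≤ n + 1) (fun s => φ s (x (n + 2))),
        Finset.sum_Icc_succ_top (by omega : 1 ≤ n + 1) (fun s => φ s y)] at hzmin'
      linarith
  intro y hy
  have hper : ∀ t ∈ Finset.Icc 1 T, φ t (x t) - φ t (x (t + 1)) ≤ Leff * (2 * η * Leff / α) := by
    intro t ht
    rw [Finset.mem_Icc] at ht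
    have h1 := hlip t ht.1 ht.2 (x t) (hxX t ht.1 (by omega)) (x (t + 1))
      (hxX (t + 1) (by omega) (by omega))
    have h2 := hstab t ht.1 ht.2
    calc φ t (x t) - φ t (x (t + 1)) ≤ |φ t (x t) - φ t (x (t + 1))| := le_abs_self _
      _ ≤ Leff * ‖x t - x (t + 1)‖ := h1
      _ ≤ Leff * (2 * η * Leff / α) := mul_le_mul_of_nonneg_left h2 hLeff
  have hsum1 : ∑ t ∈ Finset.Icc 1 T, (φ t (x t) - φ t (x (t + 1)))
      ≤ T * (Leff * (2 * η * Leff / α)) := by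
    calc ∑ t ∈ Finset.Icc 1 T, (φ t (x t) - φ t (x (t + 1)))
        ≤ ∑ _t ∈ Finset.Icc 1 T, Leff * (2 * η * Leff / α) := Finset.sum_le_sum hper
      _ = T * (Leff * (2 * η * Leff / α)) := by
          rw [Finset.sum_const, Nat.card_Icc, nsmul_eq_mul]
          norm_num
  have hbtl := hBTL T le_rfl y hy
  have hoscy : R y - R (x 1) ≤ D :=
    le_trans (le_abs_self _) (hosc y hy (x 1) (hxX 1 le_rfl (by omega)))
  have hRdiff : R y / η - R (x 1) / η ≤ D / η := by
    rw [div_sub_div_same]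
    exact (div_le_div_iff_of_pos_right hη).mpr hoscy
  have hsplit2 : ∑ t ∈ Finset.Icc 1 T, φ t (x t)
      = ∑ t ∈ Finset.Icc 1 T, (φ t (x t) - φ t (x (t + 1)))
        + ∑ t ∈ Finset.Icc 1 T, φ t (x (t + 1)) := by
    rw [← Finset.sum_add_distrib]
    apply Finset.sum_congr rfl
    intros; ring
  linarith

open Finset

lemma diag_norm {W : Type*} {H : Type*} [NormedAddCommGroup W] [NormedSpace ℝ W]
    [NormedAddCommGroup H] [NormedSpace ℝ H]
    (A : H →L[ℝ] H) (B : W →L[ℝ] H) (ρ : ℝ) (coord : ℕ → H →ₗ[ℝ] W)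
    (hρ0 : 0 < ρ)
    (hnorm : ∀ y : H, ‖y‖ = Real.sqrt (∑' i : ℕ, ‖coord i y‖ ^ 2))
    (hA0 : ∀ y : H, coord 0 (A y) = 0)
    (hAs : ∀ (y : H) (i : ℕ), coord (i + 1) (A y) = ρ • coord i y)
    (hB0 : ∀ x : W, coord 0 (B x) = x)
    (hBs : ∀ (x : W) (i : ℕ), coord (i + 1) (B x) = 0)
    (t : ℕ) (g : ℕ → W) :
    ‖∑ k ∈ Finset.range t, (A ^ k) (B (g k))‖
      = Real.sqrt (∑ i ∈ Finset.range t, (ρ ^ 2) ^ i * ‖g i‖ ^ 2) := by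
  have hdiag : ∀ (k : ℕ) (w : W) (i : ℕ),
      coord i ((A ^ k) (B w)) = if i = k then ρ ^ k • w else 0 := by
    intro k
    induction k with
    | zero =>
      intro w i
      cases i with
      | zero => simpa using hB0 w
      | succ i => simp [hBs]
    | succ k ih =>
      intro w i
      have hrw : (A ^ (k + 1)) (B w) = A ((A ^ k) (B w)) := by
        rw [pow_succ']; rfl
      cases i with
      | zero => simp [hrw, hA0]
      | succ i =>
        rw [hrw, hAs, ih]
        by_cases hik : i = k
        · subst hik
          simp [smul_smul, pow_succ']
        · simp [hik]
  have hcoord : ∀ i, coord i (∑ k ∈ Finset.range t, (A ^ k) (B (g k)))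
      = if i < t then ρ ^ i • g i else 0 := by
    intro i
    rw [map_sum]
    rw [Finset.sum_congr rfl (fun k _ => hdiag k (g k) i)]
    rw [Finset.sum_ite_eq (Finset.range t) i (fun k => ρ ^ k • g k)]
    simp [Finset.mem_range]
  have hterm : ∀ i, ‖coord i (∑ k ∈ Finset.range t, (A ^ k) (B (g k)))‖ ^ 2
      = if i < t then (ρ ^ 2) ^ i * ‖g i‖ ^ 2 else 0 := by
    intro i
    rw [hcoord]
    split_ifs with hit
    · rw [norm_smul, Real.norm_eq_abs, abs_of_pos (pow_pos hρ0 i), mul_pow,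
        ← pow_mul, mul_comm i 2, pow_mul]
    · simp
  rw [hnorm]
  congr 1
  rw [tsum_eq_sum (s := Finset.range t)
    (fun i hi => by rw [hterm i]; simp only [Finset.mem_range] at hi; simp [hi])]
  exact Finset.sum_congr rfl fun i hi => by
    rw [hterm i]; simp only [Finset.mem_range] at hi; simp [hi]

/-- FTRL regret for OCO with ρ-discounted infinite memory, 2-norm. There are
absolute constants `C, C' > 0` such that for every ρ-discounted infinite memory instance
(encoded via coordinate maps `coord i : ℋ →ₗ[ℝ] 𝒲` with the `ℓ²` norm formula, the discounted
shift `A` and inclusion `B`), `L`-Lipschitz losses whose unary forms are convex and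
`L̄`-Lipschitz on `𝒳`, and an `α`-strongly convex regularizer with oscillation at most `D`,
there is a suitable step size `η > 0` such that the FTRL iterates have policy regret at most
`C √((D/α) T L L̄ (1−ρ²)^{−3/2})`; moreover, when `L̄ ≤ L (1−ρ²)^{−1/2}`, this bound is at most
`C' √((D/α) T L² (1−ρ)^{−2})`. -/
theorem stmt_8 : ∃ C > (0:ℝ), ∃ C' > (0:ℝ),
    ∀ (W : Type u) (H : Type v)
      [NormedAddCommGroup W] [InnerProductSpace ℝ W] [CompleteSpace W]
      [NormedAddCommGroup H] [NormedSpace ℝ H] [CompleteSpace H]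
      (X : Set W), X.Nonempty → IsClosed X → Convex ℝ X →
    ∀ (A : H →L[ℝ] H) (B : W →L[ℝ] H) (ρ : ℝ) (coord : ℕ → H →ₗ[ℝ] W),
      ρ ∈ Set.Ioo (0:ℝ) 1 →
      (∀ y : H, Summable fun i : ℕ => ‖coord i y‖ ^ 2) →
      (∀ y : H, ‖y‖ = Real.sqrt (∑' i : ℕ, ‖coord i y‖ ^ 2)) →
      (∀ y : H, coord 0 (A y) = 0) →
      (∀ (y : H) (i : ℕ), coord (i + 1) (A y) = ρ • coord i y) →
      (∀ x : W, coord 0 (B x) = x) →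
      (∀ (x : W) (i : ℕ), coord (i + 1) (B x) = 0) →
    ∀ (T : ℕ) (f : ℕ → H → ℝ) (L Lbar : ℝ), 1 ≤ T → 0 ≤ L → 0 < Lbar →
      (∀ t, 1 ≤ t → t ≤ T → ∀ a b : H, |f t a - f t b| ≤ L * ‖a - b‖) →
      (∀ t, 1 ≤ t → t ≤ T →
        ConvexOn ℝ X (fun x : W => f t (∑ k ∈ Finset.range t, (A ^ k) (B x)))) →
      (∀ t, 1 ≤ t → t ≤ T → ∀ a ∈ X, ∀ b ∈ X,
        |f t (∑ k ∈ Finset.range t, (A ^ k) (B a))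
            - f t (∑ k ∈ Finset.range t, (A ^ k) (B b))| ≤ Lbar * ‖a - b‖) →
    ∀ (R : W → ℝ) (α D : ℝ), 0 < α → StrongConvexOn X α R → 0 < D →
      (∀ a ∈ X, ∀ b ∈ X, |R a - R b| ≤ D) →
    ∃ η > (0:ℝ),
      ∀ x : ℕ → W,
        (∀ t, 1 ≤ t → t ≤ T + 1 → x t ∈ X ∧
          ∀ y ∈ X,
            (∑ s ∈ Finset.Icc 1 (t - 1), f s (∑ k ∈ Finset.range s, (A ^ k) (B (x t))))
                + R (x t) / η
              ≤ (∑ s ∈ Finset.Icc 1 (t - 1), f s (∑ k ∈ Finset.range s, (A ^ k) (B y)))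
                + R y / η) →
      ∀ h : ℕ → H, h 0 = 0 → (∀ t : ℕ, h (t + 1) = A (h t) + B (x (t + 1))) →
        (∀ y ∈ X,
          (∑ t ∈ Finset.Icc 1 T, f t (h t))
              - (∑ t ∈ Finset.Icc 1 T, f t (∑ k ∈ Finset.range t, (A ^ k) (B y)))
            ≤ C * Real.sqrt (D / α * T * L * Lbar * (1 - ρ ^ 2) ^ (-(3:ℝ)/2))) ∧
        (Lbar ≤ L * (1 - ρ ^ 2) ^ (-(1:ℝ)/2) →
          C * Real.sqrt (D / α * T * L * Lbar * (1 - ρ ^ 2) ^ (-(3:ℝ)/2))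
            ≤ C' * Real.sqrt (D / α * T * L ^ 2 * ((1 - ρ)⁻¹) ^ 2)) := by
  refine ⟨5, by norm_num, 5, by norm_num, ?_⟩
  intro W H _ _ _ _ _ _ X hXne hXcl hXconv A B ρ coord hρ hsumm hnorm hA0 hAs hB0 hBs
    T f L Lbar hT hL hLbar hLip hconv hfbLip R α D hα hRsc hD hosc
  obtain ⟨hρ0, hρ1⟩ := hρ
  have hT0 : (0:ℝ) < T := by exact_mod_cast Nat.lt_of_lt_of_le Nat.zero_lt_one hT
  have hq0 : (0:ℝ) ≤ ρ ^ 2 := sq_nonneg ρ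
  have hq1 : ρ ^ 2 < 1 := by nlinarith
  set u := 1 - ρ ^ 2 with hu
  have hu0 : 0 < u := by rw [hu]; linarith
  have hu1 : u ≤ 1 := by rw [hu]; nlinarith
  set su := Real.sqrt u with hsu
  have hsu0 : 0 < su := Real.sqrt_pos.mpr hu0
  have hsu2 : su ^ 2 = u := Real.sq_sqrt hu0.le
  clear_value u su
  have hdn := diag_norm A B ρ coord hρ0 hnorm hA0 hAs hB0 hBs
  have hr12 : u ^ (-(1:ℝ)/2) = su⁻¹ := by
    rw [show -(1:ℝ)/2 = -(1/2) by norm_num, Real.rpow_neg hu0.le, ← Real.sqrt_eq_rpow, hsu]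
  have hr32 : u ^ (-(3:ℝ)/2) = (u * su)⁻¹ := by
    rw [show -(3:ℝ)/2 = (-1) + (-(1/2)) by norm_num, Real.rpow_add hu0, Real.rpow_neg_one,
      Real.rpow_neg hu0.le, ← Real.sqrt_eq_rpow, ← mul_inv, hsu]
  have hsecond : Lbar ≤ L * u ^ (-(1:ℝ)/2) →
      5 * Real.sqrt (D / α * T * L * Lbar * u ^ (-(3:ℝ)/2))
        ≤ 5 * Real.sqrt (D / α * T * L ^ 2 * ((1 - ρ)⁻¹) ^ 2) := by
    intro hLb
    rw [hr12] at hLb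
    refine mul_le_mul_of_nonneg_left ?_ (by norm_num : (0:ℝ) ≤ 5)
    apply Real.sqrt_le_sqrt
    rw [hr32]
    have h1ρ : 0 < 1 - ρ := by linarith
    have hDαT : 0 ≤ D / α * T := by positivity
    have step1 : L * Lbar * (u * su)⁻¹ ≤ L ^ 2 * (u⁻¹) ^ 2 := by
      have h' : L * Lbar ≤ L * (L * su⁻¹) := mul_le_mul_of_nonneg_left hLb hL
      have h'' := mul_le_mul_of_nonneg_right h'
        (inv_nonneg.mpr (mul_nonneg hu0.le hsu0.le))
      refine h''.trans (le_of_eq ?_)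
      rw [← hsu2]
      field_simp
    have step2 : (u⁻¹) ^ 2 ≤ ((1 - ρ)⁻¹) ^ 2 := by
      have : u⁻¹ ≤ (1 - ρ)⁻¹ := by
        apply inv_anti₀ h1ρ
        rw [hu]; nlinarith [mul_nonneg hρ0.le (le_of_lt (by linarith : (0:ℝ) < 1 - ρ))]
      exact pow_le_pow_left₀ (inv_nonneg.mpr hu0.le) this 2
    have step3 : L * Lbar * (u * su)⁻¹ ≤ L ^ 2 * ((1 - ρ)⁻¹) ^ 2 :=
      step1.trans (mul_le_mul_of_nonneg_left step2 (sq_nonneg L))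
    calc D / α * ↑T * L * Lbar * (u * su)⁻¹
        = (D / α * ↑T) * (L * Lbar * (u * su)⁻¹) := by ring
      _ ≤ (D / α * ↑T) * (L ^ 2 * ((1 - ρ)⁻¹) ^ 2) := mul_le_mul_of_nonneg_left step3 hDαT
      _ = D / α * ↑T * L ^ 2 * ((1 - ρ)⁻¹) ^ 2 := by ring
  have hfbL2 : ∀ t, 1 ≤ t → t ≤ T → ∀ a b : W,
      |f t (∑ k ∈ Finset.range t, (A ^ k) (B a))
          - f t (∑ k ∈ Finset.range t, (A ^ k) (B b))| ≤ L / su * ‖a - b‖ := by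
    intro t h1t ht a b
    have hdiff : (∑ k ∈ Finset.range t, (A ^ k) (B a)) - ∑ k ∈ Finset.range t, (A ^ k) (B b)
        = ∑ k ∈ Finset.range t, (A ^ k) (B (a - b)) := by
      rw [← Finset.sum_sub_distrib]
      exact Finset.sum_congr rfl fun k _ => by rw [← map_sub, ← map_sub]
    calc |f t (∑ k ∈ Finset.range t, (A ^ k) (B a))
          - f t (∑ k ∈ Finset.range t, (A ^ k) (B b))|
        ≤ L * ‖(∑ k ∈ Finset.range t, (A ^ k) (B a))
            - ∑ k ∈ Finset.range t, (A ^ k) (B b)‖ := hLip t h1t ht _ _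
      _ = L * Real.sqrt (∑ i ∈ Finset.range t, (ρ ^ 2) ^ i * ‖a - b‖ ^ 2) := by
          rw [hdiff, hdn t (fun _ => a - b)]
      _ ≤ L * (su⁻¹ * ‖a - b‖) := by
          refine mul_le_mul_of_nonneg_left ?_ hL
          have hb : ∑ i ∈ Finset.range t, (ρ ^ 2) ^ i * ‖a - b‖ ^ 2
              ≤ (su⁻¹ * ‖a - b‖) ^ 2 := by
            have hg := geom_fin_sum_le hq0 hq1 t
            rw [← hu] at hg
            have e : (su⁻¹ * ‖a - b‖) ^ 2 = u⁻¹ * ‖a - b‖ ^ 2 := by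
              rw [mul_pow, inv_pow, hsu2]
            rw [e, ← Finset.sum_mul]
            exact mul_le_mul_of_nonneg_right hg (sq_nonneg _)
          calc Real.sqrt (∑ i ∈ Finset.range t, (ρ ^ 2) ^ i * ‖a - b‖ ^ 2)
              ≤ Real.sqrt ((su⁻¹ * ‖a - b‖) ^ 2) := Real.sqrt_le_sqrt hb
            _ = su⁻¹ * ‖a - b‖ := Real.sqrt_sq (by positivity)
      _ = L / su * ‖a - b‖ := by rw [div_eq_mul_inv]; ring
  rcases eq_or_lt_of_le hL with hL0 | hLpos
  · -- L = 0
    refine ⟨1, one_pos, ?_⟩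
    intro x hx h h0 hrec
    refine ⟨?_, hsecond⟩
    intro y hy
    have hle0 : (∑ t ∈ Finset.Icc 1 T, f t (h t))
        - (∑ t ∈ Finset.Icc 1 T, f t (∑ k ∈ Finset.range t, (A ^ k) (B y))) ≤ 0 := by
      rw [← Finset.sum_sub_distrib]
      apply Finset.sum_nonpos
      intro t ht
      rw [Finset.mem_Icc] at ht
      have hz : |f t (h t) - f t (∑ k ∈ Finset.range t, (A ^ k) (B y))| ≤ 0 := by
        simpa [← hL0] using hLip t ht.1 ht.2 (h t) (∑ k ∈ Finset.range t, (A ^ k) (B y))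
      exact (le_abs_self _).trans hz
    exact hle0.trans (by positivity)
  · -- L > 0
    have hLs : 0 < L / su := div_pos hLpos hsu0
    set Leff := min Lbar (L / su) with hLe
    have hLeff0 : 0 < Leff := lt_min hLbar hLs
    have hL1 : Leff ≤ Lbar := min_le_left _ _
    have hL2 : Leff ≤ L / su := min_le_right _ _
    have hαusu : 0 < α * u * su := mul_pos (mul_pos hα hu0) hsu0
    set W0 := (T : ℝ) * L * Lbar / (α * u * su) with hW0
    have hW0pos : 0 < W0 := by
      rw [hW0]; exact div_pos (mul_pos (mul_pos hT0 hLpos) hLbar) hαusu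
    set G := 5 * W0 with hG
    have hGpos : 0 < G := by rw [hG]; linarith
    clear_value Leff W0 G
    have hDG : 0 < D / G := div_pos hD hGpos
    refine ⟨Real.sqrt (D / G), Real.sqrt_pos.mpr hDG, ?_⟩
    set η := Real.sqrt (D / G) with hηdef
    have hηpos : 0 < η := by rw [hηdef]; exact Real.sqrt_pos.mpr hDG
    clear_value η
    intro x hx h h0 hrec
    have hfbLeff : ∀ t, 1 ≤ t → t ≤ T → ∀ a ∈ X, ∀ b ∈ X,
        |f t (∑ k ∈ Finset.range t, (A ^ k) (B a))
            - f t (∑ k ∈ Finset.range t, (A ^ k) (B b))| ≤ Leff * ‖a - b‖ := by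
      intro t h1 h2 a ha b hb
      rcases le_total Lbar (L / su) with hc | hc
      · rw [hLe, min_eq_left hc]; exact hfbLip t h1 h2 a ha b hb
      · rw [hLe, min_eq_right hc]; exact hfbL2 t h1 h2 a b
    obtain ⟨hstab, hreg⟩ := ftrl_core X
      (fun s z => f s (∑ k ∈ Finset.range s, (A ^ k) (B z))) R α η D Leff T
      hα hηpos hLeff0.le hconv hfbLeff hRsc hosc x hx
    set sσ := 2 * η * Leff / α with hsσ
    have hsnn : 0 ≤ sσ := by
      rw [hsσ]
      exact div_nonneg (mul_nonneg (mul_nonneg (by norm_num) hηpos.le) hLeff0.le) hα.le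
    clear_value sσ
    have hform : ∀ t, h t = ∑ k ∈ Finset.range t, (A ^ k) (B (x (t - k))) := by
      intro t
      induction t with
      | zero => simpa using h0
      | succ t ih =>
        rw [hrec t, ih, Finset.sum_range_succ', map_sum]
        simp [Nat.succ_sub_succ_eq_sub, pow_succ', ContinuousLinearMap.mul_apply]
    have htele : ∀ t, t ≤ T → ∀ i, i < t → ‖x (t - i) - x t‖ ≤ i * sσ := by
      intro t ht i
      induction i with
      | zero => intro _; norm_num
      | succ i ih =>
        intro hit
        have h1 : ‖x (t - i) - x t‖ ≤ i * sσ := ih (by omega)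
        have h2 : ‖x (t - (i + 1)) - x (t - i)‖ ≤ sσ := by
          have := hstab (t - (i + 1)) (by omega) (by omega)
          rwa [show t - (i + 1) + 1 = t - i by omega] at this
        have htri : ‖x (t - (i + 1)) - x t‖
            ≤ ‖x (t - (i + 1)) - x (t - i)‖ + ‖x (t - i) - x t‖ := by
          have := dist_triangle (x (t - (i + 1))) (x (t - i)) (x t)
          simpa [dist_eq_norm] using this
        calc ‖x (t - (i + 1)) - x t‖ ≤ sσ + i * sσ := by linarith
          _ = (↑(i + 1)) * sσ := by push_cast; ring
    have hmem : ∀ t, 1 ≤ t → t ≤ T →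
        f t (h t) - f t (∑ k ∈ Finset.range t, (A ^ k) (B (x t)))
          ≤ L * (Real.sqrt 2 * sσ / (u * su)) := by
      intro t h1 h2
      have hd : h t - ∑ k ∈ Finset.range t, (A ^ k) (B (x t))
          = ∑ k ∈ Finset.range t, (A ^ k) (B (x (t - k) - x t)) := by
        rw [hform t, ← Finset.sum_sub_distrib]
        exact Finset.sum_congr rfl fun k _ => by rw [← map_sub, ← map_sub]
      refine le_trans (le_abs_self _) ?_
      refine le_trans (hLip t h1 h2 _ _) ?_
      refine mul_le_mul_of_nonneg_left ?_ hL
      rw [hd, hdn t (fun k => x (t - k) - x t)]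
      set c := Real.sqrt 2 * sσ / (u * su) with hc
      have hcnn : 0 ≤ c := by
        rw [hc]
        exact div_nonneg (mul_nonneg (Real.sqrt_nonneg 2) hsnn)
          (mul_nonneg hu0.le hsu0.le)
      clear_value c
      have hc2 : c ^ 2 = sσ ^ 2 * (2 / u ^ 3) := by
        rw [hc, div_pow, mul_pow, Real.sq_sqrt (by norm_num : (0:ℝ) ≤ 2), mul_pow, hsu2]
        field_simp
      have hsumle : ∑ i ∈ Finset.range t, (ρ ^ 2) ^ i * ‖x (t - i) - x t‖ ^ 2 ≤ c ^ 2 := by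
        rw [hc2]
        have hg := geom_sq_sum_le hq0 hq1 t
        rw [← hu] at hg
        calc ∑ i ∈ Finset.range t, (ρ ^ 2) ^ i * ‖x (t - i) - x t‖ ^ 2
            ≤ ∑ i ∈ Finset.range t, (ρ ^ 2) ^ i * ((i : ℝ) * sσ) ^ 2 := by
              refine Finset.sum_le_sum fun i hi => ?_
              refine mul_le_mul_of_nonneg_left ?_ (pow_nonneg hq0 i)
              exact pow_le_pow_left₀ (norm_nonneg _)
                (htele t h2 i (Finset.mem_range.mp hi)) 2
          _ = sσ ^ 2 * ∑ i ∈ Finset.range t, (i : ℝ) ^ 2 * (ρ ^ 2) ^ i := by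
              rw [Finset.mul_sum]
              exact Finset.sum_congr rfl fun i _ => by ring
          _ ≤ sσ ^ 2 * (2 / u ^ 3) :=
              mul_le_mul_of_nonneg_left hg (sq_nonneg _)
      calc Real.sqrt (∑ i ∈ Finset.range t, (ρ ^ 2) ^ i * ‖x (t - i) - x t‖ ^ 2)
          ≤ Real.sqrt (c ^ 2) := Real.sqrt_le_sqrt hsumle
        _ = c := Real.sqrt_sq hcnn
    refine ⟨?_, hsecond⟩
    intro y hy
    have hregy := hreg y hy
    have hmemsum : ∑ t ∈ Finset.Icc 1 T,
        (f t (h t) - f t (∑ k ∈ Finset.range t, (A ^ k) (B (x t))))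
          ≤ T * (L * (Real.sqrt 2 * sσ / (u * su))) := by
      calc ∑ t ∈ Finset.Icc 1 T,
          (f t (h t) - f t (∑ k ∈ Finset.range t, (A ^ k) (B (x t))))
          ≤ ∑ _t ∈ Finset.Icc 1 T, L * (Real.sqrt 2 * sσ / (u * su)) := by
            refine Finset.sum_le_sum fun t ht => ?_
            rw [Finset.mem_Icc] at ht
            exact hmem t ht.1 ht.2
        _ = T * (L * (Real.sqrt 2 * sσ / (u * su))) := by
            rw [Finset.sum_const, Nat.card_Icc, nsmul_eq_mul]
            norm_num
    -- final numeric assembly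
    have hsqrt2 : Real.sqrt 2 ≤ 3 / 2 := by
      have := Real.sqrt_le_sqrt (show (2:ℝ) ≤ (3/2)^2 by norm_num)
      rwa [Real.sqrt_sq (by norm_num : (0:ℝ) ≤ 3/2)] at this
    have t1 : (T : ℝ) * (L * (Real.sqrt 2 * sσ / (u * su))) ≤ 2 * Real.sqrt 2 * η * W0 := by
      rw [hsσ, hW0]
      have e : (T : ℝ) * (L * (Real.sqrt 2 * (2 * η * Leff / α) / (u * su)))
          = (2 * Real.sqrt 2 * η) * ((T : ℝ) * L * Leff / (α * u * su)) := by
        field_simp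
      rw [e]
      refine mul_le_mul_of_nonneg_left ?_
        (mul_nonneg (mul_nonneg (by norm_num) (Real.sqrt_nonneg 2)) hηpos.le)
      refine (div_le_div_iff_of_pos_right hαusu).mpr ?_
      exact mul_le_mul_of_nonneg_left hL1 (mul_nonneg hT0.le hLpos.le)
    have t2 : (T : ℝ) * (Leff * sσ) ≤ 2 * η * W0 := by
      rw [hsσ, hW0]
      have e : (T : ℝ) * (Leff * (2 * η * Leff / α)) = (2 * η) * ((T : ℝ) * Leff * Leff / α) := by
        ring
      rw [e, show 2 * η * ((T : ℝ) * L * Lbar / (α * u * su))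
        = (2 * η) * ((T : ℝ) * L * Lbar / (α * u * su)) by ring]
      refine mul_le_mul_of_nonneg_left ?_ (mul_nonneg (by norm_num) hηpos.le)
      rw [div_le_div_iff₀ hα hαusu]
      have hLe2 : Leff * Leff ≤ L / su * Lbar := mul_le_mul hL2 hL1 hLeff0.le hLs.le
      have hkey : Leff * Leff * (u * su) ≤ L * Lbar := by
        calc Leff * Leff * (u * su) ≤ Leff * Leff * su := by
              refine mul_le_mul_of_nonneg_left ?_ (mul_nonneg hLeff0.le hLeff0.le)
              simpa using mul_le_mul_of_nonneg_right hu1 hsu0.le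
          _ ≤ L / su * Lbar * su := mul_le_mul_of_nonneg_right hLe2 hsu0.le
          _ = L * Lbar := by field_simp
      calc (T : ℝ) * Leff * Leff * (α * u * su) = ((T : ℝ) * α) * (Leff * Leff * (u * su)) := by
            ring
        _ ≤ ((T : ℝ) * α) * (L * Lbar) :=
              mul_le_mul_of_nonneg_left hkey (mul_nonneg hT0.le hα.le)
        _ = (T : ℝ) * L * Lbar * α := by ring
    have hregy' : (∑ t ∈ Finset.Icc 1 T, f t (∑ k ∈ Finset.range t, (A ^ k) (B (x t))))
        - (∑ t ∈ Finset.Icc 1 T, f t (∑ k ∈ Finset.range t, (A ^ k) (B y)))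
          ≤ T * (Leff * sσ) + D / η := hregy
    have hsplitsum : ∑ t ∈ Finset.Icc 1 T, f t (h t)
        = (∑ t ∈ Finset.Icc 1 T,
            (f t (h t) - f t (∑ k ∈ Finset.range t, (A ^ k) (B (x t)))))
          + ∑ t ∈ Finset.Icc 1 T, f t (∑ k ∈ Finset.range t, (A ^ k) (B (x t))) := by
      rw [← Finset.sum_add_distrib]
      exact Finset.sum_congr rfl fun t _ => by ring
    have A2 : 2 * Real.sqrt 2 * η * W0 + 2 * η * W0 ≤ η * G := by
      have e : η * G = 5 * (η * W0) := by rw [hG]; ring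
      rw [e]
      have hx0 : 0 < η * W0 := mul_pos hηpos hW0pos
      calc 2 * Real.sqrt 2 * η * W0 + 2 * η * W0 = (2 * Real.sqrt 2 + 2) * (η * W0) := by ring
        _ ≤ 5 * (η * W0) := mul_le_mul_of_nonneg_right (by linarith only [hsqrt2]) hx0.le
    have A3 : D / η + η * G ≤ 5 * Real.sqrt (D / α * T * L * Lbar * u ^ (-(3:ℝ)/2)) := by
      have hη_eq : η = Real.sqrt D / Real.sqrt G := by
        rw [hηdef, Real.sqrt_div' D hGpos.le]
      have hsD : 0 < Real.sqrt D := Real.sqrt_pos.mpr hD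
      have hsG : 0 < Real.sqrt G := Real.sqrt_pos.mpr hGpos
      have e1 : D / η = Real.sqrt D * Real.sqrt G := by
        rw [hη_eq, div_div_eq_mul_div, mul_comm D (Real.sqrt G), mul_div_assoc,
          Real.div_sqrt, mul_comm]
      have e2 : η * G = Real.sqrt D * Real.sqrt G := by
        rw [hη_eq, div_mul_eq_mul_div, mul_div_assoc, Real.div_sqrt]
      have e3 : Real.sqrt G = Real.sqrt 5 * Real.sqrt W0 := by
        rw [hG, Real.sqrt_mul (by norm_num : (0:ℝ) ≤ 5)]
      have h5 : Real.sqrt 5 ≤ 5 / 2 := by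
        have := Real.sqrt_le_sqrt (show (5:ℝ) ≤ (5/2)^2 by norm_num)
        rwa [Real.sqrt_sq (by norm_num : (0:ℝ) ≤ 5/2)] at this
      have e4 : Real.sqrt (D / α * T * L * Lbar * u ^ (-(3:ℝ)/2))
          = Real.sqrt D * Real.sqrt W0 := by
        rw [hr32, show D / α * (T:ℝ) * L * Lbar * (u * su)⁻¹ = D * W0 by
          rw [hW0]; field_simp]
        exact Real.sqrt_mul hD.le W0
      rw [e1, e2, e4, e3]
      have hx1 : 0 ≤ Real.sqrt D * Real.sqrt W0 :=
        mul_nonneg (Real.sqrt_nonneg D) (Real.sqrt_nonneg W0)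
      calc Real.sqrt D * (Real.sqrt 5 * Real.sqrt W0)
            + Real.sqrt D * (Real.sqrt 5 * Real.sqrt W0)
          = (2 * Real.sqrt 5) * (Real.sqrt D * Real.sqrt W0) := by ring
        _ ≤ 5 * (Real.sqrt D * Real.sqrt W0) :=
            mul_le_mul_of_nonneg_right (by linarith only [h5]) hx1
    linarith only [hmemsum, hregy', t1, t2, A2, A3, hsplitsum]
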